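/- The (k+1)×(k+1) matrix over L with (i,j)-entry f_{j, 2i} (0 ≤ i, j ≤ k), where f_{i,j} are the coefficients of φ(x^i) = Σ_j f_{i,j}τ^j for a rank two Drinfeld module φ, is upper triangular with nonzero diagonal entries f_{i,2i} = Δ^{(q^{2i}-1)/(q²-1)}, hence invertible. Consequently, for any C ∈ F_q[x] of degree at most k, the even-indexed coefficients α_0, α_2, ..., α_{2k} of φ(C) determine C uniquely by solving this triangular linear system. -/

import Mathlib

/-- An abstract model of the skew polynomial ring `L⟨τ⟩` with the commutation rule
`τ u = u ^ q τ`: a ring `S` with a coefficient embedding `C : L →+* S`, a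
distinguished element `tau`, and a coefficient function giving, for every element
of `S`, its (unique, by `indep`) representation as `∑ C (u_i) * tau ^ i`. -/
structure SkewPolyRing (q : ℕ) (L : Type*) [Field L] (S : Type*) [Ring S] where
  C : L →+* S
  tau : S
  tau_comm : ∀ u : L, tau * C u = C (u ^ q) * tau
  coeff : S → (ℕ →₀ L)
  sum_coeff : ∀ U : S, ((coeff U).sum fun i a => C a * tau ^ i) = U
  indep : ∀ f : ℕ →₀ L, ((f.sum fun i a => C a * tau ^ i) = 0) → f = 0

namespace SkewPolyRing

variable {q : ℕ} {L S : Type*} [Field L] [Ring S]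

/-- The degree of a skew polynomial (`⊥` for `0`). -/
noncomputable def degree (P : SkewPolyRing q L S) (U : S) : WithBot ℕ :=
  (P.coeff U).support.max

variable (P : SkewPolyRing q L S)

lemma coeff_unique (f : ℕ →₀ L) (U : S)
    (h : (f.sum fun i a => P.C a * P.tau ^ i) = U) : P.coeff U = f := by
  have key : ((P.coeff U - f).sum fun i a => P.C a * P.tau ^ i) = 0 := by
    rw [Finsupp.sum_sub_index (fun i a b => by rw [map_sub, sub_mul]),
      P.sum_coeff U, h, sub_self]
  exact sub_eq_zero.mp (P.indep _ key)

lemma coeff_zero' : P.coeff (0 : S) = 0 :=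
  P.coeff_unique 0 0 Finsupp.sum_zero_index

lemma coeff_add' (U V : S) : P.coeff (U + V) = P.coeff U + P.coeff V :=
  P.coeff_unique _ _ (by
    rw [Finsupp.sum_add_index' (fun i => by simp) (fun i a b => by rw [map_add, add_mul]),
      P.sum_coeff, P.sum_coeff])

lemma coeff_sum' {ι : Type*} (s : Finset ι) (U : ι → S) :
    P.coeff (∑ i ∈ s, U i) = ∑ i ∈ s, P.coeff (U i) := by
  classical
  induction s using Finset.induction with
  | empty => simp [P.coeff_zero']
  | insert _ _ h ih => rw [Finset.sum_insert h, Finset.sum_insert h, P.coeff_add', ih]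

lemma coeff_C_mul (u : L) (U : S) : P.coeff (P.C u * U) = u • P.coeff U :=
  P.coeff_unique _ _ (by
    rw [Finsupp.sum_smul_index (fun i => by simp)]
    rw [show ((P.coeff U).sum fun i a => P.C (u * a) * P.tau ^ i)
        = (P.coeff U).sum fun i a => P.C u * (P.C a * P.tau ^ i) from
      Finsupp.sum_congr (fun i _ => by rw [map_mul, mul_assoc]),
      ← Finsupp.mul_sum, P.sum_coeff])

lemma coeff_C_mul_tau_pow (a : L) (m : ℕ) :
    P.coeff (P.C a * P.tau ^ m) = Finsupp.single m a :=
  P.coeff_unique _ _ (Finsupp.sum_single_index (by simp))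

lemma tau_sq_comm (u : L) : P.tau ^ 2 * P.C u = P.C (u ^ q ^ 2) * P.tau ^ 2 := by
  have h : u ^ q ^ 2 = (u ^ q) ^ q := by rw [← pow_mul, sq]
  rw [h, sq, mul_assoc, P.tau_comm, ← mul_assoc, P.tau_comm, mul_assoc]

end SkewPolyRing

/-- the `(k+1)×(k+1)` matrix with `(i,j)` entry `f_{j,2i}` (where
`φ(x)^i = ∑_j f_{i,j} τ^j`) is upper triangular with nonzero diagonal entries
`f_{i,2i} = Δ^((q^{2i}-1)/(q²-1))`, hence invertible; consequently any
`C ∈ F_q[x]` of degree at most `k` is uniquely determined by the even-indexed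
coefficients of `φ(C)`. -/
theorem triangular_coefficient_matrix_invertible
    (p q : ℕ) (Fq L S : Type*) [Field Fq] [Fintype Fq] [Field L] [Fintype L]
    [Algebra Fq L] [Ring S] (hp : p.Prime) [CharP L p]
    (hq : q = Fintype.card Fq)
    (P : SkewPolyRing q L S)
    (c g Δ : L) (hΔ : Δ ≠ 0)
    (φ : Polynomial Fq →+* S)
    (hconst : ∀ a : Fq, φ (Polynomial.C a) = P.C (algebraMap Fq L a))
    (hX : φ Polynomial.X = P.C c + P.C g * P.tau + P.C Δ * P.tau ^ 2)
    (k : ℕ)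
    (M : Matrix (Fin (k + 1)) (Fin (k + 1)) L)
    (hM : ∀ i j : Fin (k + 1),
      M i j = P.coeff (φ Polynomial.X ^ (j : ℕ)) (2 * (i : ℕ))) :
    (∀ i j : Fin (k + 1), (j : ℕ) < (i : ℕ) → M i j = 0) ∧
    (∀ i : Fin (k + 1),
      M i i = Δ ^ ((q ^ (2 * (i : ℕ)) - 1) / (q ^ 2 - 1)) ∧ M i i ≠ 0) ∧
    IsUnit M ∧
    (∀ C D : Polynomial Fq, C.natDegree ≤ k → D.natDegree ≤ k →
      (∀ i : ℕ, i ≤ k → P.coeff (φ C) (2 * i) = P.coeff (φ D) (2 * i)) →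
      C = D) := by
  have hq2 : 2 ≤ q := hq ▸ Fintype.one_lt_card
  have hq0 : q ≠ 0 := by omega
  set e : ℕ → ℕ := fun j => ∑ m ∈ Finset.range j, q ^ (2 * m) with he
  -- key structural result about powers of φ X
  have main : ∀ j : ℕ,
      (∀ n, 2 * j < n → P.coeff (φ Polynomial.X ^ j) n = 0) ∧
      P.coeff (φ Polynomial.X ^ j) (2 * j) = Δ ^ e j := by
    intro j
    induction j with
    | zero =>
      have h1 : P.coeff (φ Polynomial.X ^ 0) = Finsupp.single 0 1 := by
        have h2 := P.coeff_C_mul_tau_pow 1 0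
        rw [map_one, pow_zero, mul_one] at h2
        rw [pow_zero, h2]
      constructor
      · intro n hn; rw [h1, Finsupp.single_apply, if_neg (by omega)]
      · rw [h1]; simp [he]
    | succ j ih =>
      set f : ℕ →₀ L := P.coeff (φ Polynomial.X ^ j) with hf
      set F : ℕ →₀ L := f.sum fun i a =>
          Finsupp.single i (c * a) + Finsupp.single (i + 1) (g * a ^ q)
          + Finsupp.single (i + 2) (Δ * a ^ q ^ 2) with hF
      have key : P.coeff (φ Polynomial.X ^ (j + 1)) = F := by
        apply P.coeff_unique
        rw [hF, Finsupp.sum_sum_index (fun i => by simp)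
          (fun i a b => by rw [map_add, add_mul])]
        have step : ∀ i ∈ f.support, ∀ a : L,
            ((Finsupp.single i (c * a) + Finsupp.single (i + 1) (g * a ^ q)
              + Finsupp.single (i + 2) (Δ * a ^ q ^ 2)).sum fun m b => P.C b * P.tau ^ m)
            = φ Polynomial.X * (P.C a * P.tau ^ i) := by
          intro i _ a
          have hs : ((Finsupp.single i (c * a) + Finsupp.single (i + 1) (g * a ^ q)
              + Finsupp.single (i + 2) (Δ * a ^ q ^ 2)).sum fun m b => P.C b * P.tau ^ m)
              = P.C (c * a) * P.tau ^ i + P.C (g * a ^ q) * P.tau ^ (i + 1)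
                + P.C (Δ * a ^ q ^ 2) * P.tau ^ (i + 2) := by
            rw [Finsupp.sum_add_index' (fun m => by simp)
                (fun m a b => by rw [map_add, add_mul]),
              Finsupp.sum_add_index' (fun m => by simp)
                (fun m a b => by rw [map_add, add_mul]),
              Finsupp.sum_single_index (by simp), Finsupp.sum_single_index (by simp),
              Finsupp.sum_single_index (by simp)]
          have t1 : P.C c * (P.C a * P.tau ^ i) = P.C (c * a) * P.tau ^ i := by
            rw [map_mul, mul_assoc]
          have t2 : (P.C g * P.tau) * (P.C a * P.tau ^ i)
              = P.C (g * a ^ q) * P.tau ^ (i + 1) := by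
            calc (P.C g * P.tau) * (P.C a * P.tau ^ i)
                = P.C g * ((P.tau * P.C a) * P.tau ^ i) := by
                  rw [mul_assoc, mul_assoc]
              _ = P.C g * (P.C (a ^ q) * (P.tau * P.tau ^ i)) := by
                  rw [P.tau_comm, mul_assoc]
              _ = P.C (g * a ^ q) * P.tau ^ (i + 1) := by
                  rw [← pow_succ', map_mul, mul_assoc]
          have t3 : (P.C Δ * P.tau ^ 2) * (P.C a * P.tau ^ i)
              = P.C (Δ * a ^ q ^ 2) * P.tau ^ (i + 2) := by
            calc (P.C Δ * P.tau ^ 2) * (P.C a * P.tau ^ i)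
                = P.C Δ * ((P.tau ^ 2 * P.C a) * P.tau ^ i) := by
                  rw [mul_assoc, mul_assoc]
              _ = P.C Δ * (P.C (a ^ q ^ 2) * (P.tau ^ 2 * P.tau ^ i)) := by
                  rw [P.tau_sq_comm, mul_assoc]
              _ = P.C (Δ * a ^ q ^ 2) * P.tau ^ (i + 2) := by
                  rw [← pow_add, Nat.add_comm 2 i, map_mul, mul_assoc]
          rw [hs, hX, add_mul, add_mul, t1, t2, t3]
        calc (f.sum fun i a =>
            ((Finsupp.single i (c * a) + Finsupp.single (i + 1) (g * a ^ q)
              + Finsupp.single (i + 2) (Δ * a ^ q ^ 2)).sum fun m b => P.C b * P.tau ^ m))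
            = f.sum fun i a => φ Polynomial.X * (P.C a * P.tau ^ i) :=
              Finset.sum_congr rfl (fun i hi => step i hi _)
          _ = φ Polynomial.X * f.sum fun i a => P.C a * P.tau ^ i := by
              rw [Finsupp.mul_sum]
          _ = φ Polynomial.X ^ (j + 1) := by rw [hf, P.sum_coeff, pow_succ']
      have Fval : ∀ n : ℕ, F (n + 2)
          = c * f (n + 2) + g * f (n + 1) ^ q + Δ * f n ^ q ^ 2 := by
        intro n
        rw [hF, Finsupp.sum_apply]
        have hsplit : (f.sum fun i a =>
            (Finsupp.single i (c * a) + Finsupp.single (i + 1) (g * a ^ q)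
            + Finsupp.single (i + 2) (Δ * a ^ q ^ 2)) (n + 2))
            = (f.sum fun i a => if i = n + 2 then c * a else 0)
            + (f.sum fun i a => if i = n + 1 then g * a ^ q else 0)
            + (f.sum fun i a => if i = n then Δ * a ^ q ^ 2 else 0) := by
          rw [← Finsupp.sum_add, ← Finsupp.sum_add]
          refine Finsupp.sum_congr fun i _ => ?_
          rw [Finsupp.add_apply, Finsupp.add_apply, Finsupp.single_apply,
            Finsupp.single_apply, Finsupp.single_apply]
          have h1 : (i + 1 = n + 2) = (i = n + 1) := by
            simp only [eq_iff_iff]; omega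
          have h2 : (i + 2 = n + 2) = (i = n) := by
            simp only [eq_iff_iff]; omega
          simp only [h1, h2]
        rw [hsplit]
        have aux : ∀ (m : ℕ) (G : L → L), G 0 = 0 →
            (f.sum fun i a => if i = m then G a else 0) = G (f m) := by
          intro m G hG
          rw [Finsupp.sum, Finset.sum_ite_eq' f.support m (fun i => G (f i))]
          by_cases h : m ∈ f.support
          · simp [h]
          · simp [h, Finsupp.notMem_support_iff.mp h, hG]
        rw [aux (n + 2) (fun a => c * a) (by simp),
          aux (n + 1) (fun a => g * a ^ q) (by simp [zero_pow hq0]),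
          aux n (fun a => Δ * a ^ q ^ 2) (by simp [zero_pow (pow_ne_zero 2 hq0)])]
      constructor
      · intro n hn
        obtain ⟨m, rfl⟩ : ∃ m, n = m + 2 := ⟨n - 2, by omega⟩
        rw [key, Fval, ih.1 (m + 2) (by omega), ih.1 (m + 1) (by omega),
          ih.1 m (by omega), zero_pow hq0, zero_pow (pow_ne_zero 2 hq0)]
        ring
      · have h2 : 2 * (j + 1) = 2 * j + 2 := by ring
        rw [key, h2, Fval, ih.1 (2 * j + 2) (by omega), ih.1 (2 * j + 1) (by omega),
          ih.2, zero_pow hq0]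
        have hpow : Δ * (Δ ^ e j) ^ q ^ 2 = Δ ^ e (j + 1) := by
          rw [← pow_mul, ← pow_succ']
          congr 1
          rw [he]
          simp only
          rw [Finset.sum_range_succ', Finset.sum_mul]
          congr 1
          · refine Finset.sum_congr rfl fun m _ => ?_
            rw [← pow_add]
            congr 1
        rw [hpow]; ring
  -- e j = (q ^ (2 j) - 1)/(q^2 - 1)
  have ediv : ∀ j : ℕ, e j = (q ^ (2 * j) - 1) / (q ^ 2 - 1) := by
    have geom : ∀ j : ℕ, (q ^ 2 - 1) * e j = q ^ (2 * j) - 1 := by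
      intro j
      induction j with
      | zero => simp [he]
      | succ j ih =>
        have h1 : 1 ≤ q ^ (2 * j) := Nat.one_le_pow _ _ (by omega)
        have h2 : q ^ (2 * (j + 1)) = q ^ (2 * j) * q ^ 2 := by
          rw [← pow_add]; ring_nf
        have h3 : e (j + 1) = e j + q ^ (2 * j) := by
          rw [he]; exact Finset.sum_range_succ _ _
        have h4 : 1 ≤ q ^ 2 := Nat.one_le_pow _ _ (by omega)
        rw [h3, Nat.mul_add, ih, h2, Nat.sub_mul, one_mul, Nat.mul_comm (q ^ (2 * j))]
        have h5 : q ^ (2 * j) ≤ q ^ 2 * q ^ (2 * j) := Nat.le_mul_of_pos_left _ (by omega)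
        omega
    intro j
    have hq21 : 0 < q ^ 2 - 1 := by
      have := Nat.pow_le_pow_left hq2 2
      omega
    rw [← geom j, Nat.mul_div_cancel_left _ hq21]
  have hdiag : ∀ i : Fin (k + 1),
      M i i = Δ ^ ((q ^ (2 * (i : ℕ)) - 1) / (q ^ 2 - 1)) ∧ M i i ≠ 0 := by
    intro i
    have hMe : M i i = Δ ^ e i := by rw [hM, (main i).2]
    exact ⟨by rw [hMe, ediv], by rw [hMe]; exact pow_ne_zero _ hΔ⟩
  have htri : ∀ i j : Fin (k + 1), (j : ℕ) < (i : ℕ) → M i j = 0 := by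
    intro i j hij
    rw [hM]
    exact (main j).1 _ (by omega)
  have hunit : IsUnit M := by
    rw [Matrix.isUnit_iff_isUnit_det]
    have hbt : M.BlockTriangular id := fun i j h => htri i j h
    rw [Matrix.det_of_upperTriangular hbt]
    exact (Finset.prod_ne_zero_iff.mpr fun i _ => (hdiag i).2).isUnit
  refine ⟨htri, hdiag, hunit, ?_⟩
  intro C D hC hD hcd
  have coeff_poly : ∀ (E : Polynomial Fq), E.natDegree ≤ k → ∀ n : ℕ,
      P.coeff (φ E) n
        = ∑ j : Fin (k + 1), algebraMap Fq L (E.coeff (j : ℕ))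
            * P.coeff (φ Polynomial.X ^ (j : ℕ)) n := by
    intro E hEk n
    have expand : φ E = ∑ j ∈ Finset.range (k + 1),
        P.C (algebraMap Fq L (E.coeff j)) * φ Polynomial.X ^ j := by
      conv_lhs => rw [Polynomial.as_sum_range' E (k + 1) (by omega)]
      rw [map_sum]
      refine Finset.sum_congr rfl fun j _ => ?_
      rw [← Polynomial.C_mul_X_pow_eq_monomial, map_mul, map_pow, hconst]
    rw [expand, P.coeff_sum', ← Fin.sum_univ_eq_sum_range
      (fun j => P.coeff (P.C (algebraMap Fq L (E.coeff j)) * φ Polynomial.X ^ j)),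
      Finset.sum_apply']
    refine Finset.sum_congr rfl fun j _ => ?_
    rw [P.coeff_C_mul, Finsupp.smul_apply, smul_eq_mul]
  set v : Fin (k + 1) → L := fun j => algebraMap Fq L (C.coeff (j : ℕ)) with hv
  set w : Fin (k + 1) → L := fun j => algebraMap Fq L (D.coeff (j : ℕ)) with hw
  have hmv : M.mulVec v = M.mulVec w := by
    funext i
    have hik : (i : ℕ) ≤ k := by omega
    have heq := hcd i hik
    rw [coeff_poly C hC, coeff_poly D hD] at heq
    simp only [Matrix.mulVec, dotProduct, hM, hv, hw]
    calc ∑ j : Fin (k + 1), P.coeff (φ Polynomial.X ^ (j : ℕ)) (2 * (i : ℕ))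
          * algebraMap Fq L (C.coeff (j : ℕ))
        = ∑ j : Fin (k + 1), algebraMap Fq L (C.coeff (j : ℕ))
          * P.coeff (φ Polynomial.X ^ (j : ℕ)) (2 * (i : ℕ)) :=
          Finset.sum_congr rfl fun j _ => mul_comm _ _
      _ = ∑ j : Fin (k + 1), algebraMap Fq L (D.coeff (j : ℕ))
          * P.coeff (φ Polynomial.X ^ (j : ℕ)) (2 * (i : ℕ)) := heq
      _ = _ := Finset.sum_congr rfl fun j _ => mul_comm _ _
  have hvw : v = w := Matrix.mulVec_injective_iff_isUnit.mpr hunit hmv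
  have hinj : Function.Injective (algebraMap Fq L) := (algebraMap Fq L).injective
  ext n
  by_cases hn : n ≤ k
  · have := congrFun hvw ⟨n, by omega⟩
    exact hinj this
  · rw [Polynomial.coeff_eq_zero_of_natDegree_lt (by omega),
      Polynomial.coeff_eq_zero_of_natDegree_lt (by omega)]
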